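/- Assume that (Z,d_Z,ν_Z) is Ahlfors Q_Z-regular and (W,d_W,ν_W) is Ahlfors Q_W-regular with Q_Z > 0, Q_W > 0. Let θ₁ > 0, θ₂ > 0 and 0 < r < 2·diam Z, and suppose f : Z → W is a locally (θ₁,θ₂,r)-biHölder continuous homeomorphism such that Q_Z ≥ θ₁ Q_W. Then for any p ≥ 1 there is a constant C > 0 (depending only on the data) such that for every u ∈ L^p(W), ∫_Z |u(f(x))|^p dν_Z(x) ≤ C ∫_W |u(w)|^p dν_W(w); i.e. f induces a bounded embedding f_# : L^p(W) → L^p(Z) via composition. -/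

import Mathlib

open Metric Set MeasureTheory ENNReal

set_option linter.unusedSectionVars false
set_option linter.unusedVariables false

section aux
variable {X : Type*} [MetricSpace X] [MeasurableSpace X] [OpensMeasurableSpace X]

lemma two_mul_ofReal_lt {D s : ℝ} (hD : 0 < D) (hs : s < 2 * D) :
    ENNReal.ofReal s < 2 * ENNReal.ofReal D := by
  calc ENNReal.ofReal s < ENNReal.ofReal (2 * D) :=
        (ENNReal.ofReal_lt_ofReal_iff (by linarith)).2 hs
    _ = 2 * ENNReal.ofReal D := by
        rw [ENNReal.ofReal_mul (by norm_num)]; norm_num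

lemma ahlfors_ball_lt_top (ν : Measure X) {Q C : ℝ}
    (hub : ∀ (z : X) (s : ℝ), 0 < s →
      ENNReal.ofReal s < 2 * EMetric.diam (Set.univ : Set X) →
      ν (ball z s) ≤ ENNReal.ofReal (C * s ^ Q))
    (hΔ : 0 < EMetric.diam (Set.univ : Set X)) (z : X) (s : ℝ) :
    ν (ball z s) < ∞ := by
  rcases le_or_gt s 0 with hs | hs
  · simp [ball_eq_empty.2 hs]
  rcases eq_top_or_lt_top (EMetric.diam (Set.univ : Set X)) with hfin | hfin
  · refine lt_of_le_of_lt (hub z s hs ?_) ofReal_lt_top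
    rw [hfin, ENNReal.mul_top (by norm_num)]
    exact ofReal_lt_top
  · set D : ℝ := (EMetric.diam (Set.univ : Set X)).toReal with hD
    have hD0 : 0 < D := ENNReal.toReal_pos hΔ.ne' hfin.ne
    have hsub : ball z s ⊆ ball z (3 / 2 * D) := by
      intro x _
      have h1 : edist x z ≤ EMetric.diam (Set.univ : Set X) :=
        EMetric.edist_le_diam_of_mem (mem_univ _) (mem_univ _)
      have h2 : dist x z ≤ D := by
        rw [dist_edist]
        exact ENNReal.toReal_mono hfin.ne h1
      exact mem_ball.2 (by rw [mem_ball] at *; linarith)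
    have hlt : ENNReal.ofReal (3 / 2 * D) < 2 * EMetric.diam (Set.univ : Set X) := by
      have := two_mul_ofReal_lt hD0 (show 3 / 2 * D < 2 * D by linarith)
      rwa [ENNReal.ofReal_toReal hfin.ne] at this
    exact lt_of_le_of_lt (le_trans (measure_mono hsub)
      (hub z _ (by linarith) hlt)) ofReal_lt_top


/-- From Ahlfors-type bounds, existence of a countable `ε`-net. -/
lemma ahlfors_net (ν : Measure X) {Q C : ℝ} (hC : 1 ≤ C)
    (hreg : ∀ (z : X) (s : ℝ), 0 < s →
      ENNReal.ofReal s < 2 * EMetric.diam (Set.univ : Set X) →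
      ENNReal.ofReal (C⁻¹ * s ^ Q) ≤ ν (ball z s) ∧
      ν (ball z s) ≤ ENNReal.ofReal (C * s ^ Q))
    (hΔ : 0 < EMetric.diam (Set.univ : Set X))
    {ε : ℝ} (hε : 0 < ε) (hε2 : ENNReal.ofReal (ε / 2) < 2 * EMetric.diam (Set.univ : Set X)) :
    ∃ D : Set X, D.Countable ∧ ∀ x, ∃ d ∈ D, dist x d < ε := by
  rcases isEmpty_or_nonempty X with hX | ⟨⟨z₀⟩⟩
  · exact ⟨∅, countable_empty, fun x => (hX.false x).elim⟩
  -- σ-finiteness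
  have hfin : ∀ (z : X) (s : ℝ), ν (ball z s) < ∞ :=
    ahlfors_ball_lt_top ν (fun z s hs hlt => (hreg z s hs hlt).2) hΔ
  haveI : SigmaFinite ν := by
    refine Measure.sigmaFinite_of_countable
      (S := Set.range (fun n : ℕ => ball z₀ (n + 1))) (countable_range _) ?_ ?_
    · rintro s ⟨n, rfl⟩; exact hfin _ _
    · apply eq_univ_of_forall
      intro x
      obtain ⟨n, hn⟩ := exists_nat_gt (dist x z₀)
      exact mem_sUnion.2 ⟨ball z₀ (n + 1), ⟨n, rfl⟩, mem_ball.2 (by linarith)⟩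
  -- maximal ε-separated set via Zorn
  set S : Set (Set X) := {M | ∀ x ∈ M, ∀ y ∈ M, x ≠ y → ε ≤ dist x y} with hS
  obtain ⟨M, -, hMS, hMmax⟩ : ∃ M, ∅ ⊆ M ∧ Maximal (· ∈ S) M := by
    refine zorn_subset_nonempty S ?_ ∅ (fun x hx => absurd hx (notMem_empty x))
    intro c hcS hchain _
    refine ⟨⋃₀ c, ?_, fun s hs => subset_sUnion_of_mem hs⟩
    rintro x ⟨a, hac, hxa⟩ y ⟨b, hbc, hyb⟩ hxy
    rcases hchain.total hac hbc with h | h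
    · exact hcS hbc x (h hxa) y hyb hxy
    · exact hcS hac x hxa y (h hyb) hxy
  have hMsep := hMS
  -- near every point there is a point of M
  have hnet : ∀ x, ∃ d ∈ M, dist x d < ε := by
    intro x
    by_contra hcon
    push_neg at hcon
    have hxM : x ∉ M := fun hxM => by
      have := hcon x hxM; simp at this; linarith
    have hMx : insert x M ∈ S := by
      rintro a ha b hb hab
      rcases ha with rfl | ha <;> rcases hb with rfl | hb
      · exact absurd rfl hab
      · exact hcon b hb
      · rw [dist_comm]; exact hcon a ha
      · exact hMsep a ha b hb hab
    have := hMmax hMx (subset_insert _ _)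
    exact hxM (this (mem_insert _ _))
  refine ⟨M, ?_, hnet⟩
  -- countability from disjoint balls of positive measure
  have hdisj : Pairwise (Function.onFun Disjoint fun m : M => ball (m : X) (ε / 2)) := by
    intro i j hij
    have hne : (i : X) ≠ (j : X) := Subtype.coe_injective.ne hij
    have hd : ε ≤ dist (i : X) (j : X) := hMsep _ i.2 _ j.2 hne
    refine Set.disjoint_left.2 fun z hzi hzj => ?_
    rw [mem_ball] at hzi hzj
    have := dist_triangle (i : X) z (j : X)
    rw [dist_comm z (i : X)] at *
    linarith [dist_comm z (j : X) ▸ hzj]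
  have hpos : ∀ m : M, 0 < ν (ball (m : X) (ε / 2)) := by
    intro m
    refine lt_of_lt_of_le ?_ (hreg (m : X) (ε / 2) (by linarith) hε2).1
    apply ENNReal.ofReal_pos.2
    positivity
  have hcnt : Set.Countable {m : M | 0 < ν (ball (m : X) (ε / 2))} :=
    MeasureTheory.Measure.countable_meas_pos_of_disjoint_iUnion
      (fun m : M => measurableSet_ball) hdisj
  have : {m : M | 0 < ν (ball (m : X) (ε / 2))} = Set.univ :=
    eq_univ_of_forall fun m => hpos m
  rw [this] at hcnt
  have : Countable M := Set.countable_univ_iff.1 hcnt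
  exact Set.countable_coe_iff.1 this

end aux

section core
variable {Z W : Type*} [MetricSpace Z] [MeasurableSpace Z] [BorelSpace Z]
    [MetricSpace W] [MeasurableSpace W] [BorelSpace W]

lemma core_domination (νZ : Measure Z) (νW : Measure W)
    {QZ QW CZ CW θ₁ θ₂ Cf r t₁ : ℝ} (f : Z ≃ₜ W)
    (hQZ : 0 < QZ) (hQW : 0 < QW) (hCZ : 1 ≤ CZ) (hCW : 1 ≤ CW)
    (hAZ' : ∀ (z : Z) (s : ℝ), 0 < s →
      ENNReal.ofReal s < 2 * EMetric.diam (Set.univ : Set Z) →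
      ENNReal.ofReal (CZ⁻¹ * s ^ QZ) ≤ νZ (ball z s) ∧
      νZ (ball z s) ≤ ENNReal.ofReal (CZ * s ^ QZ))
    (hAW' : ∀ (w : W) (s : ℝ), 0 < s →
      ENNReal.ofReal s < 2 * EMetric.diam (Set.univ : Set W) →
      ENNReal.ofReal (CW⁻¹ * s ^ QW) ≤ νW (ball w s) ∧
      νW (ball w s) ≤ ENNReal.ofReal (CW * s ^ QW))
    (hθ₁ : 0 < θ₁) (hθ₂ : 0 < θ₂) (hCf : 1 ≤ Cf)
    (hflow : ∀ x y : Z, dist x y < r → Cf⁻¹ * dist x y ^ θ₁ ≤ dist (f x) (f y))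
    (hfup : ∀ x y : Z, dist x y < r → dist (f x) (f y) ≤ Cf * dist x y ^ θ₂)
    (hr : 0 < r) (hr' : ENNReal.ofReal r < 2 * EMetric.diam (Set.univ : Set Z))
    (hQ : θ₁ * QW ≤ QZ)
    (hΔW : 0 < EMetric.diam (Set.univ : Set W))
    (ht₁ : 0 < t₁) (ht₁' : ENNReal.ofReal t₁ < 2 * EMetric.diam (Set.univ : Set W)) :
    ∃ K : ℝ, 0 < K ∧ ∀ (A : Set Z) (E : Set W), MeasurableSet A → MeasurableSet E →
      (∀ x ∈ A, ∀ y ∈ A, dist x y < r) →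
      νZ (A ∩ f ⁻¹' E) ≤ ENNReal.ofReal K * νW (E ∩ f.symm ⁻¹' A) := by
  have hCf0 : (0:ℝ) < Cf := lt_of_lt_of_le one_pos hCf
  have hCZ0 : (0:ℝ) < CZ := lt_of_lt_of_le one_pos hCZ
  have hCW0 : (0:ℝ) < CW := lt_of_lt_of_le one_pos hCW
  have hrθ : (0:ℝ) < r ^ θ₁ := Real.rpow_pos_of_pos hr _
  set Tmax : ℝ := min (min t₁ 1) (r ^ θ₁ / (4 * Cf)) with hTmax_def
  have hTmax0 : 0 < Tmax := by
    apply lt_min (lt_min ht₁ one_pos); positivity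
  set t₀ : ℝ := Tmax / 4 with ht₀_def
  have ht₀0 : 0 < t₀ := by positivity
  set K₁ : ℝ := CZ * (4 * Cf) ^ (QZ / θ₁) with hK₁_def
  have hK₁0 : 0 < K₁ := by positivity
  set K₂ : ℝ := K₁ * 4 ^ QW * CW with hK₂_def
  have hK₂0 : 0 < K₂ := by positivity
  have hQWdiv : QW ≤ QZ / θ₁ := (le_div_iff₀ hθ₁).2 (by linarith [hQ, mul_comm θ₁ QW])
  -- the ball estimate
  have BALL : ∀ (A : Set Z), (∀ x ∈ A, ∀ y ∈ A, dist x y < r) →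
      ∀ (w : W) (T : ℝ), 0 < T → T ≤ Tmax →
      νZ (A ∩ f ⁻¹' closedBall w T) ≤ ENNReal.ofReal (K₁ * T ^ QW) := by
    intro A hA w T hT hTle
    rcases (A ∩ f ⁻¹' closedBall w T).eq_empty_or_nonempty with he | ⟨z₁, hz₁A, hz₁B⟩
    · simp [he]
    set s' : ℝ := (4 * Cf * T) ^ θ₁⁻¹ with hs'_def
    have h4CfT : (0:ℝ) < 4 * Cf * T := by positivity
    have hs'0 : 0 < s' := Real.rpow_pos_of_pos h4CfT _
    have hsub : A ∩ f ⁻¹' closedBall w T ⊆ ball z₁ s' := by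
      rintro z ⟨hzA, hzB⟩
      have hd : dist z z₁ < r := hA z hzA z₁ hz₁A
      have hWd : dist (f z) (f z₁) ≤ 2 * T := by
        have h1 : dist (f z) w ≤ T := mem_closedBall.1 hzB
        have h2 : dist (f z₁) w ≤ T := mem_closedBall.1 hz₁B
        calc dist (f z) (f z₁) ≤ dist (f z) w + dist w (f z₁) := dist_triangle _ _ _
          _ ≤ 2 * T := by rw [dist_comm w]; linarith
      have hlow := hflow z z₁ hd
      have hpow : dist z z₁ ^ θ₁ ≤ 2 * Cf * T := by
        have : Cf⁻¹ * dist z z₁ ^ θ₁ ≤ 2 * T := le_trans hlow hWd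
        calc dist z z₁ ^ θ₁ = Cf * (Cf⁻¹ * dist z z₁ ^ θ₁) := by
              field_simp
          _ ≤ Cf * (2 * T) := by
              apply mul_le_mul_of_nonneg_left this hCf0.le
          _ = 2 * Cf * T := by ring
      have heq : (dist z z₁ ^ θ₁) ^ θ₁⁻¹ = dist z z₁ := by
        rw [← Real.rpow_mul dist_nonneg, mul_inv_cancel₀ hθ₁.ne', Real.rpow_one]
      have hlt : dist z z₁ < s' := by
        calc dist z z₁ = (dist z z₁ ^ θ₁) ^ θ₁⁻¹ := heq.symm
          _ ≤ (2 * Cf * T) ^ θ₁⁻¹ :=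
              Real.rpow_le_rpow (Real.rpow_nonneg dist_nonneg _) hpow (by positivity)
          _ < (4 * Cf * T) ^ θ₁⁻¹ :=
              Real.rpow_lt_rpow (by positivity) (by nlinarith) (by positivity)
      exact mem_ball.2 hlt
    -- now estimate the measure of the covering ball
    have hs'r : s' ≤ r := by
      have h1 : 4 * Cf * T ≤ r ^ θ₁ := by
        have : T ≤ r ^ θ₁ / (4 * Cf) := le_trans hTle (min_le_right _ _)
        rw [le_div_iff₀ (by positivity)] at this
        linarith [this]
      calc s' ≤ (r ^ θ₁) ^ θ₁⁻¹ := Real.rpow_le_rpow h4CfT.le h1 (by positivity)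
        _ = r := by rw [← Real.rpow_mul hr.le, mul_inv_cancel₀ hθ₁.ne', Real.rpow_one]
    have hub := (hAZ' z₁ s' hs'0 (lt_of_le_of_lt (ENNReal.ofReal_le_ofReal hs'r) hr')).2
    have hest : CZ * s' ^ QZ ≤ K₁ * T ^ QW := by
      have hT1 : T ≤ 1 := le_trans hTle (le_trans (min_le_left _ _) (min_le_right _ _))
      have h1 : s' ^ QZ = (4 * Cf * T) ^ (θ₁⁻¹ * QZ) := by
        rw [hs'_def, ← Real.rpow_mul h4CfT.le]
      have h2 : (4 * Cf * T) ^ (θ₁⁻¹ * QZ) = (4 * Cf) ^ (QZ / θ₁) * T ^ (QZ / θ₁) := by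
        rw [show θ₁⁻¹ * QZ = QZ / θ₁ by rw [div_eq_mul_inv, mul_comm],
          Real.mul_rpow (by positivity) hT.le]
      have h3 : T ^ (QZ / θ₁) ≤ T ^ QW :=
        Real.rpow_le_rpow_of_exponent_ge hT hT1 hQWdiv
      calc CZ * s' ^ QZ = CZ * (4 * Cf) ^ (QZ / θ₁) * T ^ (QZ / θ₁) := by
            rw [h1, h2]; ring
        _ ≤ CZ * (4 * Cf) ^ (QZ / θ₁) * T ^ QW := by
            apply mul_le_mul_of_nonneg_left h3 (by positivity)
        _ = K₁ * T ^ QW := by rw [hK₁_def]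
    calc νZ (A ∩ f ⁻¹' closedBall w T) ≤ νZ (ball z₁ s') := measure_mono hsub
      _ ≤ ENNReal.ofReal (CZ * s' ^ QZ) := hub
      _ ≤ ENNReal.ofReal (K₁ * T ^ QW) := ENNReal.ofReal_le_ofReal hest
  -- finite measure of balls in W
  have hWfin : ∀ (w : W) (s : ℝ), νW (ball w s) < ∞ :=
    ahlfors_ball_lt_top νW (fun w s hs hlt => (hAW' w s hs hlt).2) hΔW
  refine ⟨K₂, hK₂0, fun A E hAm hEm hA => ?_⟩
  rcases A.eq_empty_or_nonempty with rfl | ⟨a₀, ha₀⟩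
  · simp
  set E' : Set W := E ∩ f.symm ⁻¹' A with hE'_def
  have hE'm : MeasurableSet E' := hEm.inter (hAm.preimage f.symm.continuous.measurable)
  have hAE' : A ∩ f ⁻¹' E = A ∩ f ⁻¹' E' := by
    ext z
    simp only [mem_inter_iff, mem_preimage, hE'_def, Homeomorph.symm_apply_apply]
    tauto
  rw [hAE']
  -- E' is contained in a fixed ball G around f a₀
  set G : Set W := ball (f a₀) (Cf * r ^ θ₂ + 1) with hG_def
  have hE'G : E' ⊆ G := by
    rintro w ⟨-, hwA⟩
    have hd : dist (f.symm w) a₀ < r := hA _ hwA _ ha₀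
    have := hfup (f.symm w) a₀ hd
    rw [Homeomorph.apply_symm_apply] at this
    have hpow : dist (f.symm w) a₀ ^ θ₂ ≤ r ^ θ₂ :=
      Real.rpow_le_rpow dist_nonneg hd.le hθ₂.le
    have : dist w (f a₀) ≤ Cf * r ^ θ₂ := by
      nlinarith [mul_le_mul_of_nonneg_left hpow hCf0.le]
    exact mem_ball.2 (by linarith)
  -- the restricted measure is finite, hence outer regular
  haveI hGfin : IsFiniteMeasure (νW.restrict G) := by
    constructor
    rw [Measure.restrict_apply_univ]
    exact hWfin _ _
  -- main epsilon argument
  apply ENNReal.le_of_forall_pos_le_add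
  intro ε hε hlt
  set η : ℝ := (ε : ℝ) / K₂ with hη_def
  have hη0 : 0 < η := by positivity
  obtain ⟨U, hE'U, hUopen, hU⟩ :=
    Set.exists_isOpen_le_add E' (νW.restrict G)
      (ε := ENNReal.ofReal η) (by simp [ENNReal.ofReal_pos, hη0])
  set U' : Set W := U ∩ G with hU'_def
  have hU'open : IsOpen U' := hUopen.inter isOpen_ball
  have hE'U' : E' ⊆ U' := subset_inter hE'U hE'G
  -- the family of closed balls
  set t : Set (W × ℝ) :=
    {q | q.1 ∈ E' ∧ 0 < q.2 ∧ q.2 ≤ t₀ ∧ closedBall q.1 q.2 ⊆ U'} with ht_def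
  obtain ⟨u, hut, hdisj, hcov⟩ :=
    Vitali.exists_disjoint_subfamily_covering_enlargement_closedBall t
      (fun q => q.1) (fun q => q.2) t₀ (fun q hq => hq.2.2.1) 4 (by norm_num)
  -- countability of u
  have hball_pos : ∀ q ∈ u, 0 < νW (closedBall q.1 q.2) := by
    intro q hq
    obtain ⟨-, hq2, hq3, -⟩ := hut hq
    have hlt2 : ENNReal.ofReal q.2 < 2 * EMetric.diam (Set.univ : Set W) := by
      refine lt_of_le_of_lt (ENNReal.ofReal_le_ofReal ?_) ht₁'
      have : Tmax ≤ t₁ := le_trans (min_le_left _ _) (min_le_left _ _)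
      rw [ht₀_def] at hq3
      linarith
    refine lt_of_lt_of_le ?_ (le_trans ((hAW' q.1 q.2 hq2 hlt2).1)
      (measure_mono ball_subset_closedBall))
    exact ENNReal.ofReal_pos.2 (by positivity)
  have hucnt : u.Countable := by
    have hAs_mble : ∀ q : u, MeasurableSet (closedBall (q : W × ℝ).1 (q : W × ℝ).2) :=
      fun q => measurableSet_closedBall
    have hAs_disj : Pairwise (Function.onFun Disjoint fun q : u => closedBall (q : W × ℝ).1 (q : W × ℝ).2) :=
      fun i j hij => hdisj i.2 j.2 (Subtype.coe_injective.ne hij)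
    have hUn : νW (⋃ q : u, closedBall (q : W × ℝ).1 (q : W × ℝ).2) ≠ ∞ := by
      refine ne_of_lt (lt_of_le_of_lt (measure_mono ?_) (hWfin (f a₀) (Cf * r ^ θ₂ + 1)))
      refine iUnion_subset fun q => ?_
      exact le_trans (le_trans (hut q.2).2.2.2 inter_subset_right) (le_refl G)
    have hcnt := MeasureTheory.Measure.countable_meas_pos_of_disjoint_of_meas_iUnion_ne_top
      νW hAs_mble hAs_disj hUn
    have : {q : u | 0 < νW (closedBall (q : W × ℝ).1 (q : W × ℝ).2)} = Set.univ :=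
      eq_univ_of_forall fun q => hball_pos q q.2
    rw [this] at hcnt
    exact Set.countable_coe_iff.1 (Set.countable_univ_iff.1 hcnt)
  -- the enlarged balls cover E'
  have hcover : E' ⊆ ⋃ q ∈ u, closedBall q.1 (4 * q.2) := by
    intro w hw
    obtain ⟨δ, hδ0, hδ⟩ := Metric.isOpen_iff.1 hU'open w (hE'U' hw)
    set s : ℝ := min (δ / 2) t₀ with hs_def
    have hs0 : 0 < s := lt_min (by linarith) ht₀0
    have hq : (w, s) ∈ t := by
      refine ⟨hw, hs0, min_le_right _ _, ?_⟩
      exact le_trans (closedBall_subset_ball (lt_of_le_of_lt (min_le_left _ _)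
        (by linarith))) hδ
    obtain ⟨b, hbu, hbsub⟩ := hcov (w, s) hq
    exact mem_biUnion hbu (hbsub (mem_closedBall_self hs0.le))
  -- lower Ahlfors bound on the small balls
  have hlow2 : ∀ q ∈ u, ENNReal.ofReal (CW⁻¹ * q.2 ^ QW) ≤ νW (closedBall q.1 q.2) := by
    intro q hq
    obtain ⟨-, hq2, hq3, -⟩ := hut hq
    have hlt2 : ENNReal.ofReal q.2 < 2 * EMetric.diam (Set.univ : Set W) := by
      refine lt_of_le_of_lt (ENNReal.ofReal_le_ofReal ?_) ht₁'
      have : Tmax ≤ t₁ := le_trans (min_le_left _ _) (min_le_left _ _)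
      rw [ht₀_def] at hq3
      linarith
    exact le_trans ((hAW' q.1 q.2 hq2 hlt2).1) (measure_mono ball_subset_closedBall)
  -- put everything together
  calc νZ (A ∩ f ⁻¹' E')
      ≤ νZ (⋃ q ∈ u, A ∩ f ⁻¹' closedBall q.1 (4 * q.2)) := by
        refine measure_mono ?_
        rintro z ⟨hzA, hzE⟩
        obtain ⟨q, hqu, hqm⟩ := mem_iUnion₂.1 (hcover hzE)
        exact mem_iUnion₂.2 ⟨q, hqu, hzA, hqm⟩
    _ ≤ ∑' q : u, νZ (A ∩ f ⁻¹' closedBall (q : W × ℝ).1 (4 * (q : W × ℝ).2)) :=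
        measure_biUnion_le νZ hucnt _
    _ ≤ ∑' q : u, ENNReal.ofReal K₂ * νW (closedBall (q : W × ℝ).1 (q : W × ℝ).2) := by
        refine ENNReal.tsum_le_tsum fun q => ?_
        obtain ⟨-, hq2, hq3, -⟩ := hut q.2
        have h4 : 0 < 4 * (q : W × ℝ).2 := by linarith
        have h4' : 4 * (q : W × ℝ).2 ≤ Tmax := by rw [ht₀_def] at hq3; linarith
        refine le_trans (BALL A hA _ _ h4 h4') ?_
        have heq : K₁ * (4 * (q : W × ℝ).2) ^ QW = K₂ * (CW⁻¹ * (q : W × ℝ).2 ^ QW) := by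
          rw [Real.mul_rpow (by norm_num) hq2.le, hK₂_def]
          field_simp
        rw [heq, ENNReal.ofReal_mul hK₂0.le]
        exact mul_le_mul_right (hlow2 _ q.2) _
    _ = ENNReal.ofReal K₂ * ∑' q : u, νW (closedBall (q : W × ℝ).1 (q : W × ℝ).2) :=
        ENNReal.tsum_mul_left
    _ = ENNReal.ofReal K₂ * νW (⋃ q ∈ u, closedBall q.1 q.2) := by
        rw [measure_biUnion hucnt hdisj fun q _ => measurableSet_closedBall]
    _ ≤ ENNReal.ofReal K₂ * νW U' := by
        refine mul_le_mul_right (measure_mono ?_) _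
        exact iUnion₂_subset fun q hq => (hut hq).2.2.2
    _ ≤ ENNReal.ofReal K₂ * ((νW.restrict G) E' + ENNReal.ofReal η) := by
        refine mul_le_mul_right ?_ _
        have : νW U' = (νW.restrict G) U := by
          rw [Measure.restrict_apply hUopen.measurableSet]
        rw [this]
        exact hU
    _ ≤ ENNReal.ofReal K₂ * (νW E' + ENNReal.ofReal η) := by
        refine mul_le_mul_right (add_le_add_left ?_ _) _
        calc (νW.restrict G) E' = νW (E' ∩ G) := Measure.restrict_apply hE'm
          _ ≤ νW E' := measure_mono inter_subset_left
    _ = ENNReal.ofReal K₂ * νW E' + ε := by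
        rw [mul_add, ← ENNReal.ofReal_mul hK₂0.le]
        congr 1
        rw [hη_def, mul_div_cancel₀ _ hK₂0.ne']
        exact ENNReal.ofReal_coe_nnreal

end core


/-- `(Z, d_Z, ν)` is Ahlfors `Q`-regular: there is `C ≥ 1` with
`C⁻¹ r^Q ≤ ν(B(z, r)) ≤ C r^Q` for all `z ∈ Z` and `0 < r < 2 ⬝ diam Z`. -/
def AhlforsRegular {Z : Type*} [MetricSpace Z] [MeasurableSpace Z]
    (ν : Measure Z) (Q : ℝ) : Prop :=
  ∃ C : ℝ, 1 ≤ C ∧ ∀ (z : Z) (r : ℝ), 0 < r →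
    ENNReal.ofReal r < 2 * EMetric.diam (Set.univ : Set Z) →
      ENNReal.ofReal (C⁻¹ * r ^ Q) ≤ ν (ball z r) ∧
      ν (ball z r) ≤ ENNReal.ofReal (C * r ^ Q)

/-- Let `(Z, νZ)` be Ahlfors `Q_Z`-regular and `(W, νW)` be Ahlfors
`Q_W`-regular (`Q_Z, Q_W > 0`), let `θ₁, θ₂ > 0` and `0 < r < 2 ⬝ diam Z`, and suppose
`f : Z → W` is a locally `(θ₁, θ₂, r)`-biHölder continuous homeomorphism with
`Q_Z ≥ θ₁ Q_W`. Then for any `p ≥ 1` there is `C > 0` such that for every `u ∈ L^p(W)`,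
`∫_Z |u(f(x))|^p dνZ(x) ≤ C ∫_W |u(w)|^p dνW(w)`; i.e. `f` induces a bounded embedding
`f_# : L^p(W) → L^p(Z)` via composition. -/
theorem lp_embedding_of_locally_biHolder
    {Z W : Type*} [MetricSpace Z] [MeasurableSpace Z] [BorelSpace Z]
    [MetricSpace W] [MeasurableSpace W] [BorelSpace W]
    (νZ : Measure Z) (νW : Measure W)
    (QZ QW : ℝ) (hQZ : 0 < QZ) (hQW : 0 < QW)
    (hAZ : AhlforsRegular νZ QZ) (hAW : AhlforsRegular νW QW)
    (θ₁ θ₂ : ℝ) (hθ₁ : 0 < θ₁) (hθ₂ : 0 < θ₂)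
    (r : ℝ) (hr : 0 < r) (hr' : ENNReal.ofReal r < 2 * EMetric.diam (Set.univ : Set Z))
    (f : Z ≃ₜ W)
    (hf : ∃ Cf : ℝ, 1 ≤ Cf ∧ ∀ x y : Z, dist x y < r →
      Cf⁻¹ * dist x y ^ θ₁ ≤ dist (f x) (f y) ∧ dist (f x) (f y) ≤ Cf * dist x y ^ θ₂)
    (hQ : θ₁ * QW ≤ QZ) (p : ℝ) (hp : 1 ≤ p) :
    ∃ C : ℝ, 0 < C ∧ ∀ u : W → ℝ, MemLp u (ENNReal.ofReal p) νW →
      ∫⁻ x, ENNReal.ofReal (|u (f x)| ^ p) ∂νZ ≤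
        ENNReal.ofReal C * ∫⁻ w, ENNReal.ofReal (|u w| ^ p) ∂νW := by
  obtain ⟨CZ, hCZ, hAZ'⟩ := hAZ
  obtain ⟨CW, hCW, hAW'⟩ := hAW
  obtain ⟨Cf, hCf, hf'⟩ := hf
  -- diam Z > 0
  have hΔZ : 0 < EMetric.diam (Set.univ : Set Z) := by
    rcases eq_or_lt_of_le (zero_le : 0 ≤ EMetric.diam (Set.univ : Set Z)) with h | h
    · simp [← h] at hr'
    · exact h
  -- two distinct points in Z, hence in W
  obtain ⟨z₀, -, z₁, -, hz01⟩ := EMetric.diam_pos_iff'.1 hΔZ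
  have hΔW : 0 < EMetric.diam (Set.univ : Set W) := by
    refine lt_of_lt_of_le ?_ (EMetric.edist_le_diam_of_mem (mem_univ (f z₀)) (mem_univ (f z₁)))
    exact edist_pos.2 (fun h => hz01 (f.injective h))
  -- a usable radius t₁ in W
  obtain ⟨t₁, ht₁, ht₁'⟩ :
      ∃ t₁ : ℝ, 0 < t₁ ∧ ENNReal.ofReal t₁ < 2 * EMetric.diam (Set.univ : Set W) := by
    rcases eq_top_or_lt_top (EMetric.diam (Set.univ : Set W)) with h | h
    · exact ⟨1, one_pos, by rw [h, ENNReal.mul_top (by norm_num)]; exact ofReal_lt_top⟩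
    · set D : ℝ := (EMetric.diam (Set.univ : Set W)).toReal with hD
      have hD0 : 0 < D := ENNReal.toReal_pos hΔW.ne' h.ne
      refine ⟨D, hD0, ?_⟩
      calc ENNReal.ofReal D < 2 * ENNReal.ofReal D :=
            two_mul_ofReal_lt hD0 (by linarith)
        _ = 2 * EMetric.diam (Set.univ : Set W) := by
            rw [hD, ENNReal.ofReal_toReal h.ne]
  obtain ⟨K, hK0, hcore⟩ := core_domination νZ νW f hQZ hQW hCZ hCW hAZ' hAW'
    hθ₁ hθ₂ hCf (fun x y h => (hf' x y h).1) (fun x y h => (hf' x y h).2)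
    hr hr' hQ hΔW ht₁ ht₁'
  -- countable net in Z
  obtain ⟨D, hDc, hDnet⟩ := ahlfors_net νZ hCZ hAZ' hΔZ (ε := r / 3) (by linarith)
    (lt_of_le_of_lt (ENNReal.ofReal_le_ofReal (by linarith)) hr')
  obtain ⟨d₀, hd₀, -⟩ := hDnet z₀
  obtain ⟨c, hc⟩ := Set.Countable.exists_eq_range hDc ⟨d₀, hd₀⟩
  set g : ℕ → Set Z := fun n => ball (c n) (r / 3) with hg_def
  have hguniv : ⋃ n, g n = univ := by
    apply eq_univ_of_forall
    intro x
    obtain ⟨d, hdD, hdx⟩ := hDnet x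
    rw [hc] at hdD
    obtain ⟨n, rfl⟩ := hdD
    exact mem_iUnion.2 ⟨n, mem_ball.2 hdx⟩
  set A : ℕ → Set Z := disjointed g with hA_def
  have hAm : ∀ n, MeasurableSet (A n) :=
    MeasurableSet.disjointed (fun n => measurableSet_ball)
  have hApd : Pairwise (Function.onFun Disjoint A) := disjoint_disjointed g
  have hAuniv : ⋃ n, A n = univ := by rw [hA_def, iUnion_disjointed, hguniv]
  have hdiam : ∀ n, ∀ x ∈ A n, ∀ y ∈ A n, dist x y < r := by
    intro n x hx y hy
    have hx' : x ∈ g n := disjointed_subset g n hx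
    have hy' : y ∈ g n := disjointed_subset g n hy
    rw [hg_def, mem_ball] at hx' hy'
    have := dist_triangle x (c n) y
    rw [dist_comm (c n) y] at this
    linarith
  -- domination of the pushforward measure
  have hmap : Measure.map f νZ ≤ ENNReal.ofReal K • νW := by
    rw [Measure.le_iff]
    intro E hE
    rw [Measure.map_apply f.continuous.measurable hE, Measure.smul_apply, smul_eq_mul]
    have hpre : f ⁻¹' E = ⋃ n, A n ∩ f ⁻¹' E := by
      rw [← iUnion_inter, hAuniv, univ_inter]
    have hEm : MeasurableSet (f ⁻¹' E) := hE.preimage f.continuous.measurable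
    calc νZ (f ⁻¹' E) = νZ (⋃ n, A n ∩ f ⁻¹' E) := by rw [← hpre]
      _ = ∑' n, νZ (A n ∩ f ⁻¹' E) :=
          measure_iUnion
            (fun i j hij => ((hApd hij).mono inter_subset_left inter_subset_left))
            (fun n => (hAm n).inter hEm)
      _ ≤ ∑' n, ENNReal.ofReal K * νW (E ∩ f.symm ⁻¹' A n) :=
          ENNReal.tsum_le_tsum fun n => hcore (A n) E (hAm n) hE (hdiam n)
      _ = ENNReal.ofReal K * ∑' n, νW (E ∩ f.symm ⁻¹' A n) := ENNReal.tsum_mul_left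
      _ = ENNReal.ofReal K * νW (⋃ n, E ∩ f.symm ⁻¹' A n) := by
          rw [measure_iUnion
            (fun i j hij => (((hApd hij).preimage f.symm).mono
              inter_subset_right inter_subset_right))
            (fun n => hE.inter ((hAm n).preimage f.symm.continuous.measurable))]
      _ = ENNReal.ofReal K * νW E := by
          rw [← inter_iUnion, ← preimage_iUnion, hAuniv, preimage_univ, inter_univ]
  refine ⟨K, hK0, fun u hu => ?_⟩
  have h1 : AEMeasurable u νW := hu.aestronglyMeasurable.aemeasurable
  have hgm : AEMeasurable (fun w => ENNReal.ofReal (|u w| ^ p)) νW :=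
    (ENNReal.continuous_ofReal.comp
      ((Real.continuous_rpow_const (by linarith)).comp continuous_abs)).measurable.comp_aemeasurable h1
  have hgm' : AEMeasurable (fun w => ENNReal.ofReal (|u w| ^ p)) (Measure.map f νZ) :=
    (hgm.smul_measure (ENNReal.ofReal K)).mono_measure hmap
  calc ∫⁻ x, ENNReal.ofReal (|u (f x)| ^ p) ∂νZ
      = ∫⁻ w, ENNReal.ofReal (|u w| ^ p) ∂(Measure.map f νZ) :=
        (lintegral_map' hgm' f.continuous.measurable.aemeasurable).symm
    _ ≤ ∫⁻ w, ENNReal.ofReal (|u w| ^ p) ∂(ENNReal.ofReal K • νW) :=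
        lintegral_mono' hmap le_rfl
    _ = ENNReal.ofReal K * ∫⁻ w, ENNReal.ofReal (|u w| ^ p) ∂νW :=
        lintegral_smul_measure _ _
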